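/- Suppose the partition has spectral gap at least Λ > 0, and let ω > 0 and α > 0 satisfy γ = ((1+α)/α)·(ω/Λ) < 1. Let m = 2^l for some l = 0, 1, 2, ..., let f ∈ PW_ω(L), and let S : V → ℂ satisfy ∑_{v∈Ω_j} S(v) = ∑_{v∈Ω_j} f(v) for every j and ‖L^m S‖ ≤ ‖L^m u‖ for every u : V → ℂ with ∑_{v∈Ω_j} u(v) = ∑_{v∈Ω_j} f(v) for every j. Then ‖f − S‖ ≤ 2·γ^m·‖f‖. -/

import Mathlib

open Finset

noncomputable section
variable {V : Type*} [Fintype V]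

local notation "⟪" x ", " y "⟫" => @inner ℂ _ _ x y

def Lop (w : V → V → ℝ) : EuclideanSpace ℂ V →ₗ[ℂ] EuclideanSpace ℂ V where
  toFun g := WithLp.toLp 2 (fun x => ∑ y, (g x - g y) * (w x y : ℂ))
  map_add' g h := by
    refine congrArg (WithLp.toLp 2) (funext fun x => ?_)
    show ∑ y : V, (_ : ℂ) = (∑ y : V, (_ : ℂ)) + ∑ y : V, (_ : ℂ)
    rw [← Finset.sum_add_distrib]
    congr 1; funext y
    show ((g x + h x) - (g y + h y)) * (w x y : ℂ) = _
    ring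
  map_smul' c g := by
    refine congrArg (WithLp.toLp 2) (funext fun x => ?_)
    show ∑ y, _ = c * ∑ y, _
    rw [Finset.mul_sum]
    congr 1; funext y
    show (c * g x - c * g y) * (w x y : ℂ) = _
    ring

theorem Lop_symm {w : V → V → ℝ} (hsymm : ∀ u v, w u v = w v u) :
    (Lop w).IsSymmetric := by
  intro x y
  show ∑ v, y v * (starRingEnd ℂ) (∑ u, (x v - x u) * (w v u : ℂ))
      = ∑ v, (∑ u, (y v - y u) * (w v u : ℂ)) * (starRingEnd ℂ) (x v)
  rw [Finset.sum_congr rfl fun v _ => mul_comm (y v) ((starRingEnd ℂ) (∑ u, (x v - x u) * (w v u : ℂ))),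
    Finset.sum_congr rfl fun v _ => mul_comm (∑ u, (y v - y u) * (w v u : ℂ)) ((starRingEnd ℂ) (x v))]
  show ∑ v, (starRingEnd ℂ) (∑ u, (x v - x u) * (w v u : ℂ)) * y v
      = ∑ v, (starRingEnd ℂ) (x v) * ∑ u, (y v - y u) * (w v u : ℂ)
  have h1 : ∀ v : V, (starRingEnd ℂ) (∑ u, (x v - x u) * (w v u : ℂ)) * y v
      = ∑ u, ((starRingEnd ℂ) (x v) * y v * (w v u : ℂ)
          - (starRingEnd ℂ) (x u) * y v * (w v u : ℂ)) := by
    intro v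
    rw [map_sum, Finset.sum_mul]
    congr 1; funext u
    rw [map_mul, map_sub, Complex.conj_ofReal]
    ring
  have h2 : ∀ v : V, (starRingEnd ℂ) (x v) * ∑ u, (y v - y u) * (w v u : ℂ)
      = ∑ u, ((starRingEnd ℂ) (x v) * y v * (w v u : ℂ)
          - (starRingEnd ℂ) (x v) * y u * (w v u : ℂ)) := by
    intro v
    rw [Finset.mul_sum]
    congr 1; funext u; ring
  simp only [h1, h2, Finset.sum_sub_distrib]
  congr 1
  rw [Finset.sum_comm]
  congr 1; funext v; congr 1; funext u
  rw [hsymm v u]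

theorem re_inner_Lop {w : V → V → ℝ} (hsymm : ∀ u v, w u v = w v u)
    (g : EuclideanSpace ℂ V) :
    RCLike.re ⟪Lop w g, g⟫ = 1 / 2 * ∑ v, ∑ u, ‖g v - g u‖ ^ 2 * w v u := by
  have key : ⟪Lop w g, g⟫ + ⟪Lop w g, g⟫
      = ∑ v, ∑ u, ((‖g v - g u‖ ^ 2 : ℝ) : ℂ) * (w v u : ℂ) := by
    have expand : ⟪Lop w g, g⟫
        = (∑ v, ∑ u, (starRingEnd ℂ) (g v) * g v * (w v u : ℂ))
          - ∑ v, ∑ u, (starRingEnd ℂ) (g u) * g v * (w v u : ℂ) := by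
      rw [← Finset.sum_sub_distrib]
      show ∑ v, g v * (starRingEnd ℂ) (∑ u, (g v - g u) * (w v u : ℂ)) = _
      rw [Finset.sum_congr rfl fun v _ => mul_comm (g v) ((starRingEnd ℂ) (∑ u, (g v - g u) * (w v u : ℂ)))]
      show ∑ v, (starRingEnd ℂ) (∑ u, (g v - g u) * (w v u : ℂ)) * g v = _
      congr 1; funext v
      rw [map_sum, Finset.sum_mul, ← Finset.sum_sub_distrib]
      congr 1; funext u
      rw [map_mul, map_sub, Complex.conj_ofReal]
      ring
    have expand2 : ⟪Lop w g, g⟫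
        = (∑ v, ∑ u, (starRingEnd ℂ) (g u) * g u * (w v u : ℂ))
          - ∑ v, ∑ u, (starRingEnd ℂ) (g v) * g u * (w v u : ℂ) := by
      rw [expand]
      congr 1
      · rw [Finset.sum_comm]
        congr 1; funext v; congr 1; funext u; rw [hsymm v u]
      · rw [Finset.sum_comm]
        congr 1; funext v; congr 1; funext u; rw [hsymm v u]
    nth_rewrite 1 [expand]
    nth_rewrite 1 [expand2]
    rw [sub_add_sub_comm, ← Finset.sum_add_distrib, ← Finset.sum_add_distrib,
      ← Finset.sum_sub_distrib]
    congr 1; funext v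
    rw [← Finset.sum_add_distrib, ← Finset.sum_add_distrib, ← Finset.sum_sub_distrib]
    congr 1; funext u
    have : ((‖g v - g u‖ ^ 2 : ℝ) : ℂ) = (starRingEnd ℂ) (g v - g u) * (g v - g u) := by
      rw [Complex.conj_mul']
      norm_cast
    rw [this, map_sub]
    ring
  have key' : ⟪Lop w g, g⟫ + ⟪Lop w g, g⟫
      = ((∑ v, ∑ u, ‖g v - g u‖ ^ 2 * w v u : ℝ) : ℂ) := by
    rw [key]; push_cast; ring
  have hre := congrArg Complex.re key'
  rw [Complex.add_re, Complex.ofReal_re] at hre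
  have : RCLike.re ⟪Lop w g, g⟫ = Complex.re ⟪Lop w g, g⟫ := rfl
  rw [this]
  linarith [hre]

theorem partition_sum {J : Type*} [Fintype J] (Ω : J → Finset V)
    (hdisj : ∀ i j, i ≠ j → Disjoint (Ω i) (Ω j)) (hcover : ∀ v : V, ∃ j, v ∈ Ω j)
    {M : Type*} [AddCommMonoid M] (F : V → M) :
    ∑ j, ∑ v ∈ Ω j, F v = ∑ v, F v := by
  classical
  have huniv : (univ : Finset V) = univ.biUnion Ω := by
    ext v
    simp only [mem_univ, mem_biUnion, true_iff, true_and]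
    exact hcover v
  rw [show ∑ v, F v = ∑ v ∈ univ.biUnion Ω, F v by rw [← huniv]]
  exact (Finset.sum_biUnion fun i _ j _ hij => hdisj i j hij).symm

theorem poincare {w : V → V → ℝ} (hsymm : ∀ u v, w u v = w v u)
    (hnn : ∀ u v, 0 ≤ w u v)
    {J : Type*} [Fintype J] (Ω : J → Finset V)
    (hdisj : ∀ i j, i ≠ j → Disjoint (Ω i) (Ω j)) (hcover : ∀ v : V, ∃ j, v ∈ Ω j)
    {Λ : ℝ}
    (hgap : ∀ j, ∀ g : V → ℂ, ∑ v ∈ Ω j, g v = 0 →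
      Λ * ∑ v ∈ Ω j, ‖g v‖ ^ 2 ≤
        1 / 2 * ∑ u ∈ Ω j, ∑ v ∈ Ω j, ‖g u - g v‖ ^ 2 * w u v)
    (g : EuclideanSpace ℂ V) (hg : ∀ j, ∑ v ∈ Ω j, g v = 0) :
    Λ * ‖g‖ ^ 2 ≤ ‖Lop w g‖ * ‖g‖ := by
  have h1 : ‖g‖ ^ 2 = ∑ v, ‖g v‖ ^ 2 := by
    rw [EuclideanSpace.norm_eq, Real.sq_sqrt]
    positivity
  have step1 : Λ * ‖g‖ ^ 2 = ∑ j, Λ * ∑ v ∈ Ω j, ‖g v‖ ^ 2 := by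
    rw [h1, ← partition_sum Ω hdisj hcover (fun v => ‖g v‖ ^ 2), Finset.mul_sum]
  have step2 : ∑ j, Λ * ∑ v ∈ Ω j, ‖g v‖ ^ 2
      ≤ ∑ j, 1 / 2 * ∑ u ∈ Ω j, ∑ v ∈ Ω j, ‖g u - g v‖ ^ 2 * w u v :=
    Finset.sum_le_sum fun j _ => hgap j g (hg j)
  have step3 : ∑ j, 1 / 2 * ∑ u ∈ Ω j, ∑ v ∈ Ω j, ‖g u - g v‖ ^ 2 * w u v
      ≤ ∑ j, 1 / 2 * ∑ u ∈ Ω j, ∑ v, ‖g u - g v‖ ^ 2 * w u v := by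
    refine Finset.sum_le_sum fun j _ => ?_
    refine mul_le_mul_of_nonneg_left (Finset.sum_le_sum fun u _ => ?_) (by norm_num)
    refine Finset.sum_le_sum_of_subset_of_nonneg (Finset.subset_univ _) fun v _ _ => ?_
    have := hnn u v
    positivity
  have step4 : ∑ j, 1 / 2 * ∑ u ∈ Ω j, ∑ v, ‖g u - g v‖ ^ 2 * w u v
      = RCLike.re ⟪Lop w g, g⟫ := by
    rw [← Finset.mul_sum, partition_sum Ω hdisj hcover
      (fun u => ∑ v, ‖g u - g v‖ ^ 2 * w u v), re_inner_Lop hsymm]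
  have step5 : RCLike.re ⟪Lop w g, g⟫ ≤ ‖Lop w g‖ * ‖g‖ :=
    le_trans (RCLike.re_le_norm _) (norm_inner_le_norm _ _)
  linarith [step2, step3]

theorem iterate_bound {w : V → V → ℝ}
    (hsymLop : (Lop w : EuclideanSpace ℂ V →ₗ[ℂ] EuclideanSpace ℂ V).IsSymmetric)
    {Λ : ℝ} (hΛ : 0 < Λ)
    (g : EuclideanSpace ℂ V)
    (hpoin : Λ * ‖g‖ ^ 2 ≤ ‖Lop w g‖ * ‖g‖)
    (l : ℕ) :
    ‖g‖ ≤ (1 / Λ) ^ (2 ^ l) * ‖((Lop w ^ (2 ^ l) : _) ) g‖ := by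
  induction l with
  | zero =>
    simp only [pow_zero, pow_one]
    rcases eq_or_lt_of_le (norm_nonneg g) with h0 | h0
    · rw [← h0]
      positivity
    · have h1 : Λ * ‖g‖ ≤ ‖Lop w g‖ := by nlinarith [hpoin, h0]
      rw [div_mul_eq_mul_div, le_div_iff₀ hΛ]
      nlinarith [h1]
  | succ l ih =>
    set m := 2 ^ l with hm
    set a := (1 / Λ) ^ m with ha
    have ha0 : 0 ≤ a := by positivity
    have hsq : ‖((Lop w ^ m : _)) g‖ ^ 2 ≤ ‖g‖ * ‖((Lop w ^ (2 * m) : _)) g‖ := by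
      have h1 : (‖((Lop w ^ m : _)) g‖ : ℝ) ^ 2
          = RCLike.re ⟪(Lop w ^ m) g, (Lop w ^ m) g⟫ :=
        (inner_self_eq_norm_sq _).symm
      have h2 : ⟪(Lop w ^ m) g, (Lop w ^ m) g⟫ = ⟪g, (Lop w ^ (2 * m)) g⟫ := by
        rw [hsymLop.pow m g ((Lop w ^ m) g), ← Module.End.mul_apply, ← pow_add,
          two_mul]
      rw [h1, h2]
      exact le_trans (RCLike.re_le_norm _) (norm_inner_le_norm _ _)
    rcases eq_or_lt_of_le (norm_nonneg g) with h0 | h0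
    · rw [← h0]
      positivity
    · have key : ‖g‖ ^ 2 ≤ a ^ 2 * (‖g‖ * ‖((Lop w ^ (2 * m) : _)) g‖) := by
        nlinarith [ih, hsq, norm_nonneg ((Lop w ^ m) g), norm_nonneg g]
      have h2m : 2 ^ (l + 1) = 2 * m := by rw [hm, pow_succ, mul_comm]
      rw [h2m, show (1 / Λ) ^ (2 * m) = a ^ 2 by rw [ha, ← pow_mul, mul_comm]]
      nlinarith [key, h0]

theorem norm_sq_sum_orth {ι : Type*} (s : Finset ι) (x : ι → EuclideanSpace ℂ V)
    (horth : ∀ i ∈ s, ∀ j ∈ s, i ≠ j → ⟪x i, x j⟫ = 0) :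
    ‖∑ i ∈ s, x i‖ ^ 2 = ∑ i ∈ s, ‖x i‖ ^ 2 := by
  rw [← inner_self_eq_norm_sq (𝕜 := ℂ), sum_inner]
  have : ∀ i ∈ s, ⟪x i, ∑ j ∈ s, x j⟫ = ⟪x i, x i⟫ := by
    intro i hi
    rw [inner_sum]
    exact Finset.sum_eq_single i (fun j hj hne => horth i hi j hj (Ne.symm hne))
      (fun h => absurd hi h)
  rw [Finset.sum_congr rfl this, map_sum]
  exact Finset.sum_congr rfl fun i _ => inner_self_eq_norm_sq (x i)

theorem pw_bound {w : V → V → ℝ}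
    (hsymLop : (Lop w : EuclideanSpace ℂ V →ₗ[ℂ] EuclideanSpace ℂ V).IsSymmetric)
    {ω : ℝ} (hω : 0 ≤ ω) (f : EuclideanSpace ℂ V)
    (hf : f ∈ Submodule.span ℂ {g : EuclideanSpace ℂ V | ∃ c : ℝ, 0 ≤ c ∧ c ≤ ω ∧
      Lop w g = (c : ℂ) • g})
    (k : ℕ) : ‖((Lop w ^ k : _)) f‖ ≤ ω ^ k * ‖f‖ := by
  classical
  set T := Lop w with hT
  have hle : Submodule.span ℂ {g : EuclideanSpace ℂ V | ∃ c : ℝ, 0 ≤ c ∧ c ≤ ω ∧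
      T g = (c : ℂ) • g}
      ≤ ⨆ c : Set.Icc (0:ℝ) ω, Module.End.eigenspace (T : Module.End ℂ (EuclideanSpace ℂ V)) ((c : ℝ) : ℂ) := by
    rw [Submodule.span_le]
    rintro g ⟨c, hc0, hcω, hg⟩
    exact (le_iSup (fun c : Set.Icc (0:ℝ) ω =>
        Module.End.eigenspace (T : Module.End ℂ (EuclideanSpace ℂ V)) ((c : ℝ) : ℂ))
      ⟨c, hc0, hcω⟩) (Module.End.mem_eigenspace_iff.mpr hg)
  obtain ⟨d, hd, hdf⟩ := (Submodule.mem_iSup_iff_exists_finsupp _ f).mp (hle hf)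
  have heig : ∀ i : Set.Icc (0:ℝ) ω, T (d i) = ((i : ℝ) : ℂ) • d i := fun i =>
    Module.End.mem_eigenspace_iff.mp (hd i)
  have hpow : ∀ (i : Set.Icc (0:ℝ) ω) (n : ℕ),
      (T ^ n) (d i) = (((i : ℝ) : ℂ)) ^ n • d i := by
    intro i n
    induction n with
    | zero => simp
    | succ n ih =>
      rw [pow_succ, Module.End.mul_apply, heig i, map_smul, ih, smul_smul, pow_succ]
      rw [mul_comm]
  have horth : ∀ i j : Set.Icc (0:ℝ) ω, i ≠ j → ⟪d i, d j⟫ = 0 := by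
    intro i j hij
    have hcc : ((i : ℝ) : ℂ) ≠ ((j : ℝ) : ℂ) := by
      simp only [ne_eq, Complex.ofReal_inj]
      exact fun h => hij (Subtype.ext h)
    have h1 : ⟪T (d i), d j⟫ = ⟪d i, T (d j)⟫ := hsymLop (d i) (d j)
    rw [heig i, heig j, inner_smul_left, inner_smul_right, Complex.conj_ofReal] at h1
    by_contra hne
    exact hcc (mul_right_cancel₀ hne h1)
  have hfsum : f = ∑ i ∈ d.support, d i := by
    rw [← hdf]; rfl
  have hTk : (T ^ k) f = ∑ i ∈ d.support, (((i : ℝ) : ℂ)) ^ k • d i := by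
    rw [hfsum, map_sum]
    exact Finset.sum_congr rfl fun i _ => hpow i k
  have hnf : ‖f‖ ^ 2 = ∑ i ∈ d.support, ‖d i‖ ^ 2 := by
    rw [hfsum]
    exact norm_sq_sum_orth _ _ fun i _ j _ hij => horth i j hij
  have hnTk : ‖(T ^ k) f‖ ^ 2 = ∑ i ∈ d.support, ((i : ℝ) ^ k) ^ 2 * ‖d i‖ ^ 2 := by
    rw [hTk, norm_sq_sum_orth _ _ ?_]
    · refine Finset.sum_congr rfl fun i _ => ?_
      rw [norm_smul]
      have : ‖(((i : ℝ) : ℂ)) ^ k‖ = (i : ℝ) ^ k := by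
        rw [norm_pow, Complex.norm_real, Real.norm_of_nonneg i.2.1]
      rw [this, mul_pow]
    · intro i _ j _ hij
      rw [inner_smul_left, inner_smul_right, horth i j hij, mul_zero, mul_zero]
  have hsq : ‖(T ^ k) f‖ ^ 2 ≤ (ω ^ k * ‖f‖) ^ 2 := by
    rw [hnTk, mul_pow, hnf, Finset.mul_sum]
    refine Finset.sum_le_sum fun i _ => ?_
    have h1 : ((i : ℝ) ^ k) ^ 2 ≤ (ω ^ k) ^ 2 := by
      have := pow_le_pow_left₀ i.2.1 i.2.2 k
      exact pow_le_pow_left₀ (pow_nonneg i.2.1 k) this 2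
    nlinarith [sq_nonneg ‖d i‖]
  have h1 := Real.sqrt_le_sqrt hsq
  rwa [Real.sqrt_sq (norm_nonneg _), Real.sqrt_sq (by positivity)] at h1
end


/-- Let `(V, w)` be a finite weighted graph with Laplacian `L`, and
`{Ω_j}_{j∈J}` a partition of `V` into nonempty subsets with spectral gap at least
`Λ > 0`.  Let `ω > 0` and `α > 0` satisfy `γ = ((1+α)/α)·(ω/Λ) < 1`, let `m = 2^l`,
let `f ∈ PW_ω(L)`, and let `S : V → ℂ` satisfy `∑_{v∈Ω_j} S(v) = ∑_{v∈Ω_j} f(v)` for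
every `j` and `‖L^m S‖ ≤ ‖L^m u‖` for every `u` with the same averages as `f`.
Then `‖f − S‖ ≤ 2·γ^m·‖f‖`. -/
theorem stmt_14 {V : Type*} [Fintype V] {J : Type*} [Fintype J] (w : V → V → ℝ)
    (hsymm : ∀ u v, w u v = w v u) (hnn : ∀ u v, 0 ≤ w u v)
    (hdiag : ∀ v, w v v = 0)
    (Ω : J → Finset V) (hne : ∀ j, (Ω j).Nonempty)
    (hdisj : ∀ i j, i ≠ j → Disjoint (Ω i) (Ω j)) (hcover : ∀ v : V, ∃ j, v ∈ Ω j)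
    (Λ : ℝ) (hΛ : 0 < Λ)
    (hgap : ∀ j, ∀ g : V → ℂ, ∑ v ∈ Ω j, g v = 0 →
      Λ * ∑ v ∈ Ω j, ‖g v‖ ^ 2 ≤
        1 / 2 * ∑ u ∈ Ω j, ∑ v ∈ Ω j, ‖g u - g v‖ ^ 2 * w u v)
    (ω α : ℝ) (hω : 0 < ω) (hα : 0 < α)
    (hγ : (1 + α) / α * (ω / Λ) < 1)
    (l : ℕ)
    (f : V → ℂ)
    (hf : f ∈ Submodule.span ℂ {g : V → ℂ | ∃ c : ℝ, 0 ≤ c ∧ c ≤ ω ∧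
      ∀ v, ∑ u, (g v - g u) * (w v u : ℂ) = (c : ℂ) * g v})
    (S : V → ℂ)
    (hSinterp : ∀ j, ∑ v ∈ Ω j, S v = ∑ v ∈ Ω j, f v)
    (hSmin : ∀ u : V → ℂ, (∀ j, ∑ v ∈ Ω j, u v = ∑ v ∈ Ω j, f v) →
      Real.sqrt (∑ v, ‖((fun g : V → ℂ => fun x => ∑ y, (g x - g y) * (w x y : ℂ))^[2 ^ l] S) v‖ ^ 2) ≤
        Real.sqrt (∑ v, ‖((fun g : V → ℂ => fun x => ∑ y, (g x - g y) * (w x y : ℂ))^[2 ^ l] u) v‖ ^ 2)) :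
    Real.sqrt (∑ v, ‖f v - S v‖ ^ 2) ≤
      2 * ((1 + α) / α * (ω / Λ)) ^ (2 ^ l) * Real.sqrt (∑ v, ‖f v‖ ^ 2) := by
  classical
  set m := 2 ^ l with hm
  set T : EuclideanSpace ℂ V →ₗ[ℂ] EuclideanSpace ℂ V := Lop w with hT
  set F : EuclideanSpace ℂ V := WithLp.toLp 2 f with hF
  set Sw : EuclideanSpace ℂ V := WithLp.toLp 2 S with hSw
  have hsymT : T.IsSymmetric := Lop_symm hsymm
  have hiter : ∀ u : V → ℂ,
      (fun g : V → ℂ => fun x => ∑ y, (g x - g y) * (w x y : ℂ))^[m] u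
        = WithLp.ofLp ((T ^ m) (WithLp.toLp 2 u)) := by
    have key : ∀ n (u : V → ℂ), (fun g : V → ℂ => fun x => ∑ y, (g x - g y) * (w x y : ℂ))^[n] u
        = WithLp.ofLp ((⇑T)^[n] (WithLp.toLp 2 u)) := by
      intro n
      induction n with
      | zero => intro u; rfl
      | succ n ih =>
        intro u
        rw [Function.iterate_succ_apply, Function.iterate_succ_apply, ih]
        rfl
    intro u
    rw [Module.End.pow_apply]
    exact key m u
  set g : EuclideanSpace ℂ V := WithLp.toLp 2 (fun v => F v - Sw v) with hg
  have hgzero : ∀ j, ∑ v ∈ Ω j, g v = 0 := by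
    intro j
    simp only [hg, hF, hSw, PiLp.toLp_apply, Finset.sum_sub_distrib, hSinterp j, sub_self]
  have hpoin := poincare hsymm hnn Ω hdisj hcover hgap g hgzero
  have hiterate := iterate_bound hsymT hΛ g hpoin l
  have hminf := hSmin f (fun j => rfl)
  have hSf : ‖(T ^ m) Sw‖ ≤ ‖(T ^ m) F‖ := by
    rw [hiter S, hiter f] at hminf
    rw [EuclideanSpace.norm_eq, EuclideanSpace.norm_eq]
    exact hminf
  have hf' : F ∈ Submodule.span ℂ
      {g : EuclideanSpace ℂ V | ∃ c : ℝ, 0 ≤ c ∧ c ≤ ω ∧ Lop w g = (c : ℂ) • g} := by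
    have hset' : {g : EuclideanSpace ℂ V | ∃ c : ℝ, 0 ≤ c ∧ c ≤ ω ∧ Lop w g = (c : ℂ) • g}
        = (WithLp.linearEquiv 2 ℂ (V → ℂ)).symm.toLinearMap '' {g : V → ℂ | ∃ c : ℝ, 0 ≤ c ∧ c ≤ ω ∧
          ∀ v, ∑ u, (g v - g u) * (w v u : ℂ) = (c : ℂ) * g v} := by
      ext g
      constructor
      · rintro ⟨c, h1, h2, h3⟩
        exact ⟨WithLp.ofLp g, ⟨c, h1, h2, fun v => congrArg (fun z : EuclideanSpace ℂ V => z v) h3⟩, rfl⟩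
      · rintro ⟨g', ⟨c, h1, h2, h3⟩, rfl⟩
        exact ⟨c, h1, h2, congrArg (WithLp.toLp 2) (funext h3)⟩
    rw [hset', Submodule.span_image]
    exact Submodule.mem_map.mpr ⟨f, hf, rfl⟩
  have hfpw : ‖(T ^ m) F‖ ≤ ω ^ m * ‖F‖ :=
    pw_bound hsymT hω.le F hf' m
  have hgsub : g = F - Sw := by
    exact congrArg (WithLp.toLp 2) (funext fun v => rfl)
  have htri : ‖(T ^ m) g‖ ≤ 2 * ‖(T ^ m) F‖ := by
    rw [hgsub, map_sub]
    calc ‖(T ^ m) F - (T ^ m) Sw‖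
        ≤ ‖(T ^ m) F‖ + ‖(T ^ m) Sw‖ :=
          norm_sub_le _ _
      _ ≤ 2 * ‖(T ^ m) F‖ := by linarith [hSf]
  have hpowpos : (0:ℝ) < (1 / Λ) ^ m := by positivity
  have hchain : ‖g‖ ≤ 2 * (ω / Λ) ^ m * ‖F‖ := by
    have h1 : ‖g‖ ≤ (1 / Λ) ^ m * (2 * (ω ^ m * ‖F‖)) := by
      refine hiterate.trans ?_
      refine mul_le_mul_of_nonneg_left ?_ hpowpos.le
      refine htri.trans ?_
      linarith [hfpw]
    have h2 : (1 / Λ) ^ m * (2 * (ω ^ m * ‖F‖))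
        = 2 * (ω / Λ) ^ m * ‖F‖ := by
      rw [div_pow, div_pow, one_pow]
      field_simp
    rw [h2] at h1
    exact h1
  have hγ1 : (ω / Λ) ^ m ≤ ((1 + α) / α * (ω / Λ)) ^ m := by
    refine pow_le_pow_left₀ (by positivity) ?_ m
    refine le_mul_of_one_le_left (by positivity) ?_
    rw [le_div_iff₀ hα]
    linarith
  have hfin : Real.sqrt (∑ v, ‖f v - S v‖ ^ 2) = ‖g‖ := (EuclideanSpace.norm_eq g).symm
  have hfin2 : Real.sqrt (∑ v, ‖f v‖ ^ 2) = ‖F‖ :=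
    (EuclideanSpace.norm_eq F).symm
  rw [hfin, hfin2]
  refine hchain.trans ?_
  have hfn : (0:ℝ) ≤ ‖F‖ := norm_nonneg _
  nlinarith [hγ1, hfn]
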